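/- Let Ψ be an instance of {1,2}-CSP whose constraint graph G is connected and bipartite, assume P_∞ ⊨ Ψ, and let f be the ≺-least variable. Then P_4 ⊨ Ψ if and only if there is no edge xy of G with β(x) = β(y) = 2, x ≠ f and y ≠ f (i.e. the ∃^{≥2} vertices of G are pairwise non-adjacent except possibly for edges incident to f). -/

import Mathlib

namespace CountingCSP

/-! ## The basic framework

An instance `Ψ` of `{1,2}`-CSP is modelled by a number `m` of variables, the variable set
being `Fin m` with its natural linear order `<` (the order of quantification `≺`), a function
`β : Fin m → ℕ` taking values in `{1,2}` (variable `v` is quantified by `∃^{≥ β v}`), and a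
simple graph `G` on `Fin m` (the constraint graph).  A target graph is a type `B` together
with an adjacency relation `E : B → B → Prop` (loops allowed in general). -/

/-- Adjacency of the finite path `P_n` on the vertices `{1,…,n}`, modelled as `Fin n`. -/
def pathAdj (n : ℕ) (i j : Fin n) : Prop :=
  (i : ℕ) + 1 = j ∨ (j : ℕ) + 1 = i

/-- Adjacency of the infinite path `P_∞` on `ℤ`: `i` and `j` adjacent iff `|i - j| = 1`. -/
def intPathAdj (i j : ℤ) : Prop := |i - j| = 1

/-- `SatFrom β G E i f` : processing the variables of the instance in `≺`-increasing order
starting from variable `i`, where the earlier variables have been assigned according to `f`,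
the instance can be satisfied.  At each variable `v` one asks for a set `S` of `β v` distinct
elements of the target such that for every `b ∈ S` the rest of the instance can be satisfied
with `v ↦ b`; when all variables are assigned, the assignment must be a homomorphism. -/
def SatFrom {m : ℕ} {B : Type*} (β : Fin m → ℕ) (G : SimpleGraph (Fin m))
    (E : B → B → Prop) (i : ℕ) (f : Fin m → B) : Prop :=
  if h : i < m then
    ∃ S : Finset B, S.card = β ⟨i, h⟩ ∧
      ∀ b ∈ S, SatFrom β G E (i + 1) (Function.update f ⟨i, h⟩ b)
  else ∀ u v : Fin m, G.Adj u v → E (f u) (f v)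
termination_by m - i
decreasing_by omega

/-- `Sat β G E` : the instance with quantifiers `β` and constraint graph `G` is satisfied by
the target graph with adjacency `E`  (i.e. `H ⊨ Ψ`).  The initial assignment is irrelevant
since every variable is assigned before it is used. -/
def Sat {m : ℕ} {B : Type*} (β : Fin m → ℕ) (G : SimpleGraph (Fin m))
    (E : B → B → Prop) : Prop :=
  ∀ f : Fin m → B, SatFrom β G E 0 f

/-- A graph is bipartite iff it has a proper 2-colouring. -/
def Bipartite {V : Type*} (G : SimpleGraph V) : Prop :=
  ∃ c : V → Bool, ∀ u v, G.Adj u v → c u ≠ c v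

/-! ## Walks, looping walks, and the distance function δ -/

/-- `λ(Q) = |Q| − 2·∑_{interior vertices x of Q} (β x − 1)`, where `|Q|` is the length
(number of edges) of the walk `Q = x₁,…,x_r`, and the interior vertices are `x₂,…,x_{r−1}`. -/
def lamWalk {m : ℕ} (β : Fin m → ℕ) (Q : List (Fin m)) : ℤ :=
  ((Q.length : ℤ) - 1) - 2 * (((Q.drop 1).dropLast).map (fun x => (β x : ℤ) - 1)).sum

/-- Looping walks of `G` (with respect to the quantification order `<` on `Fin m`):
a walk `x₁,…,x_r` with `x₁ ≠ x_r` such that if `r ≥ 3` then both endpoints strictly precede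
every interior vertex and the walk splits at some interior position into two looping walks. -/
inductive IsLoopingWalk {m : ℕ} (G : SimpleGraph (Fin m)) : List (Fin m) → Prop
  | base {x y : Fin m} : G.Adj x y → IsLoopingWalk G [x, y]
  | comb {x y z : Fin m} {Q₁ Q₂ : List (Fin m)} :
      IsLoopingWalk G (x :: (Q₁ ++ [y])) →
      IsLoopingWalk G (y :: (Q₂ ++ [z])) →
      x ≠ z →
      (∀ w ∈ Q₁ ++ y :: Q₂, x < w ∧ z < w) →
      IsLoopingWalk G (x :: (Q₁ ++ y :: Q₂ ++ [z]))

/-- `Q` is a looping walk between `u` and `v` (in either direction). -/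
def LoopingWalkBetween {m : ℕ} (G : SimpleGraph (Fin m)) (u v : Fin m)
    (Q : List (Fin m)) : Prop :=
  IsLoopingWalk G Q ∧
    ((Q.head? = some u ∧ Q.getLast? = some v) ∨ (Q.head? = some v ∧ Q.getLast? = some u))

/-- `IsDelta G β u v d` : `d = δ(u,v)`, i.e. `d` is the minimum of `λ(Q)` over all looping
walks `Q` of `G` between `u` and `v`.  (`δ(u,v) < ∞` corresponds to `∃ d, IsDelta G β u v d`.) -/
def IsDelta {m : ℕ} (G : SimpleGraph (Fin m)) (β : Fin m → ℕ) (u v : Fin m) (d : ℤ) : Prop :=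
  (∃ Q, LoopingWalkBetween G u v Q ∧ lamWalk β Q = d) ∧
    ∀ Q, LoopingWalkBetween G u v Q → d ≤ lamWalk β Q

/-! ## The functions γ and γ′ -/

/-- `IsGammaVal G β g v t` : `t = max(0, max_{u ≺ v, δ(u,v) < ∞} (g u − δ(u,v) + β v − 1))`. -/
def IsGammaVal {m : ℕ} (G : SimpleGraph (Fin m)) (β : Fin m → ℕ) (g : Fin m → ℤ)
    (v : Fin m) (t : ℤ) : Prop :=
  0 ≤ t ∧
  (∀ u, u < v → ∀ d, IsDelta G β u v d → g u - d + (β v : ℤ) - 1 ≤ t) ∧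
  (t = 0 ∨ ∃ u, u < v ∧ ∃ d, IsDelta G β u v d ∧ t = g u - d + (β v : ℤ) - 1)

/-- `g` is the function `γ`: `γ(v) = 0` for the `≺`-least vertex, and otherwise
`γ(v) = β(v) − 1 + max(0, max_{u ≺ v, δ(u,v) < ∞} (γ(u) − δ(u,v) + β(v) − 1))`. -/
def IsGamma {m : ℕ} (G : SimpleGraph (Fin m)) (β : Fin m → ℕ) (g : Fin m → ℤ) : Prop :=
  ∀ v : Fin m,
    if (v : ℕ) = 0 then g v = 0
    else ∃ t, IsGammaVal G β g v t ∧ g v = (β v : ℤ) - 1 + t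

/-- `g` is the function `γ′`:
`γ′(v) = β(v) − 1 + max(0, max_{u ≺ v, δ(u,v) < ∞} (γ′(u) − δ(u,v) + β(v) − 1))`
(so `γ′(v) = β(v) − 1` for the `≺`-least vertex). -/
def IsGamma' {m : ℕ} (G : SimpleGraph (Fin m)) (β : Fin m → ℕ) (g : Fin m → ℤ) : Prop :=
  ∀ v : Fin m, ∃ t, IsGammaVal G β g v t ∧ g v = (β v : ℤ) - 1 + t

/-! ## The closure sets (F, R⁺, R⁻) for the {2}-CSP(K₄) algorithm -/

mutual
/-- Membership in the closure set `F` of pairs (initialised as the edge set of `G`). -/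
inductive InF {m : ℕ} (G : SimpleGraph (Fin m)) : Finset (Fin m) → Prop
  | edge {x y : Fin m} : G.Adj x y → InF G {x, y}
  | x3a {x y w z : Fin m} : [x, y, w, z].Pairwise (· ≠ ·) →
      x < z → y < z → w < z → ¬(x < w ∧ y < w) →
      InF G {w, z} → InRp G {x, y, z} → InF G {x, w}
  | x3b {x y w z : Fin m} : [x, y, w, z].Pairwise (· ≠ ·) →
      x < z → y < z → w < z → ¬(x < w ∧ y < w) →
      InF G {w, z} → InRp G {x, y, z} → InF G {y, w}
  | x4 {x y w z : Fin m} : [x, y, w, z].Pairwise (· ≠ ·) →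
      x < y → w < y → y < z →
      InRp G {x, y, z} → InRm G {w, y, z} → InF G {x, w}
  | x7a {x y q w z : Fin m} : [x, y, q, w, z].Pairwise (· ≠ ·) →
      x < q → y < q → w < q → q < z → ¬(x < w ∧ y < w) →
      InRp G {x, y, z} → InRm G {w, q, z} → InF G {x, w}
  | x7a' {x y q w z : Fin m} : [x, y, q, w, z].Pairwise (· ≠ ·) →
      x < q → y < q → w < q → q < z → ¬(x < w ∧ y < w) →
      InRm G {x, y, z} → InRp G {w, q, z} → InF G {x, w}
  | x7b {x y q w z : Fin m} : [x, y, q, w, z].Pairwise (· ≠ ·) →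
      x < q → y < q → w < q → q < z → ¬(x < w ∧ y < w) →
      InRp G {x, y, z} → InRm G {w, q, z} → InF G {y, w}
  | x7b' {x y q w z : Fin m} : [x, y, q, w, z].Pairwise (· ≠ ·) →
      x < q → y < q → w < q → q < z → ¬(x < w ∧ y < w) →
      InRm G {x, y, z} → InRp G {w, q, z} → InF G {y, w}

/-- Membership in the closure set `R⁺` of triples. -/
inductive InRp {m : ℕ} (G : SimpleGraph (Fin m)) : Finset (Fin m) → Prop
  | x2 {x y w z : Fin m} : [x, y, w, z].Pairwise (· ≠ ·) →
      x < z → y < z → w < z →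
      InF G {w, z} → InRm G {x, y, z} → InRp G {x, y, w}
  | x4 {x y w z : Fin m} : [x, y, w, z].Pairwise (· ≠ ·) →
      x < y → w < y → y < z →
      InRp G {x, y, z} → InRm G {w, y, z} → InRp G {x, y, w}
  | x5p {x y w z : Fin m} : [x, y, w, z].Pairwise (· ≠ ·) →
      x < z → y < z → w < z →
      InRp G {x, y, z} → InRp G {w, y, z} → InRp G {x, y, w}
  | x5m {x y w z : Fin m} : [x, y, w, z].Pairwise (· ≠ ·) →
      x < z → y < z → w < z →
      InRm G {x, y, z} → InRm G {w, y, z} → InRp G {x, y, w}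
  | x6ap {x y q w z : Fin m} : [x, y, q, w, z].Pairwise (· ≠ ·) →
      x < q → y < q → w < q → q < z →
      InRp G {x, y, z} → InRp G {w, q, z} → InRp G {x, y, w}
  | x6am {x y q w z : Fin m} : [x, y, q, w, z].Pairwise (· ≠ ·) →
      x < q → y < q → w < q → q < z →
      InRm G {x, y, z} → InRm G {w, q, z} → InRp G {x, y, w}
  | x6bp {x y q w z : Fin m} : [x, y, q, w, z].Pairwise (· ≠ ·) →
      x < q → y < q → w < q → q < z →
      InRp G {x, y, z} → InRp G {w, q, z} → InRp G {x, y, q}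
  | x6bm {x y q w z : Fin m} : [x, y, q, w, z].Pairwise (· ≠ ·) →
      x < q → y < q → w < q → q < z →
      InRm G {x, y, z} → InRm G {w, q, z} → InRp G {x, y, q}

/-- Membership in the closure set `R⁻` of triples. -/
inductive InRm {m : ℕ} (G : SimpleGraph (Fin m)) : Finset (Fin m) → Prop
  | x1 {x y z : Fin m} : [x, y, z].Pairwise (· ≠ ·) →
      x < z → y < z →
      InF G {x, z} → InF G {y, z} → InRm G {x, y, z}
  | x3 {x y w z : Fin m} : [x, y, w, z].Pairwise (· ≠ ·) →
      x < z → y < z → w < z → x < w → y < w →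
      InF G {w, z} → InRp G {x, y, z} → InRm G {x, y, w}
  | x7a {x y q w z : Fin m} : [x, y, q, w, z].Pairwise (· ≠ ·) →
      x < q → y < q → w < q → q < z →
      InRp G {x, y, z} → InRm G {w, q, z} → InRm G {x, y, q}
  | x7a' {x y q w z : Fin m} : [x, y, q, w, z].Pairwise (· ≠ ·) →
      x < q → y < q → w < q → q < z →
      InRm G {x, y, z} → InRp G {w, q, z} → InRm G {x, y, q}
  | x7b {x y q w z : Fin m} : [x, y, q, w, z].Pairwise (· ≠ ·) →
      x < q → y < q → w < q → q < z → x < w → y < w →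
      InRp G {x, y, z} → InRm G {w, q, z} → InRm G {x, y, w}
  | x7b' {x y q w z : Fin m} : [x, y, q, w, z].Pairwise (· ≠ ·) →
      x < q → y < q → w < q → q < z → x < w → y < w →
      InRm G {x, y, z} → InRp G {w, q, z} → InRm G {x, y, w}
end



/-! ### Auxiliary machinery for the proof -/

instance pathAdjDecidable (n : ℕ) (i j : Fin n) : Decidable (pathAdj n i j) := by
  unfold pathAdj; infer_instance

lemma step_par : ∀ (x y : Fin 4) (p q : Bool), pathAdj 4 x y → p ≠ q →
    ((x:ℕ):ZMod 2) + (if p then 1 else 0) = ((y:ℕ):ZMod 2) + (if q then 1 else 0) := by decide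

lemma fin_main : ∀ b₁ b₂ : Fin 4, b₁ ≠ b₂ → ((b₁:ℕ):ZMod 2) = ((b₂:ℕ):ZMod 2) →
    ∀ c₁ c₂ c₃ c₄ : Fin 4, c₁ ≠ c₂ → c₃ ≠ c₄ →
    ((c₁:ℕ):ZMod 2) = ((c₂:ℕ):ZMod 2) → ((c₃:ℕ):ZMod 2) = ((c₄:ℕ):ZMod 2) →
    pathAdj 4 b₁ c₁ → pathAdj 4 b₁ c₂ → pathAdj 4 b₂ c₃ → pathAdj 4 b₂ c₄ → False := by decide

def AA (e d : Bool) : Finset (Fin 4) :=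
  if d then (if e then {0,2} else {1,3}) else (if e then {2} else {1})

lemma AA_key : ∀ (eu ev du dv : Bool), eu ≠ ev → (du && dv) = false →
    ∀ a ∈ AA eu du, ∀ b ∈ AA ev dv, pathAdj 4 a b := by decide

lemma AA_card1 : ∀ e d, 1 ≤ (AA e d).card := by decide
lemma AA_card2 : ∀ e, 2 ≤ (AA e true).card := by decide

section Aux

variable {m : ℕ}

lemma hom_parity (G : SimpleGraph (Fin m)) (c : Fin m → Bool)
    (hc : ∀ u v, G.Adj u v → c u ≠ c v) (g : Fin m → Fin 4)
    (hg : ∀ u v, G.Adj u v → pathAdj 4 (g u) (g v)) {u v : Fin m} (w : G.Walk u v) :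
    ((g u : ℕ) : ZMod 2) + (if c u then 1 else 0) =
      ((g v : ℕ) : ZMod 2) + (if c v then 1 else 0) := by
  induction w with
  | nil => rfl
  | @cons a b d hab q ih => exact (step_par (g a) (g b) (c a) (c b) (hg a b hab) (hc a b hab)).trans ih

lemma anchor (G : SimpleGraph (Fin m)) (hconn : G.Connected) (c : Fin m → Bool)
    (hc : ∀ u v, G.Adj u v → c u ≠ c v) (g g' : Fin m → Fin 4)
    (hg : ∀ u v, G.Adj u v → pathAdj 4 (g u) (g v))
    (hg' : ∀ u v, G.Adj u v → pathAdj 4 (g' u) (g' v))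
    (f u : Fin m) (hff : g f = g' f) :
    ((g u : ℕ) : ZMod 2) = ((g' u : ℕ) : ZMod 2) := by
  obtain ⟨w⟩ := hconn.preconnected f u
  have h1 := hom_parity G c hc g hg w
  have h2 := hom_parity G c hc g' hg' w
  rw [hff] at h1
  exact add_right_cancel (h1.symm.trans h2)

lemma L1 (β : Fin m → ℕ) (hβ : ∀ v, β v = 1 ∨ β v = 2) (G : SimpleGraph (Fin m))
    (i : ℕ) (f₀ : Fin m → Fin 4) (hs : SatFrom β G (pathAdj 4) i f₀) :
    ∃ g : Fin m → Fin 4, (∀ u v, G.Adj u v → pathAdj 4 (g u) (g v)) ∧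
      ∀ v : Fin m, (v : ℕ) < i → g v = f₀ v := by
  rw [SatFrom] at hs
  by_cases h : i < m
  · rw [dif_pos h] at hs
    obtain ⟨S, hcard, hS⟩ := hs
    have hpos : 0 < S.card := by rcases hβ ⟨i, h⟩ with h' | h' <;> rw [h'] at hcard <;> omega
    obtain ⟨b, hb⟩ := Finset.card_pos.mp hpos
    obtain ⟨g, hg, ha⟩ := L1 β hβ G (i + 1) _ (hS b hb)
    exact ⟨g, hg, fun v hv => (ha v (by omega)).trans
      (Function.update_of_ne (Fin.ne_of_val_ne (by simp only [Fin.val_mk]; omega)) _ _)⟩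
  · rw [dif_neg h] at hs
    exact ⟨f₀, hs, fun _ _ => rfl⟩
termination_by m - i

lemma L2 (β : Fin m → ℕ) (hβ : ∀ v, β v = 1 ∨ β v = 2) (G : SimpleGraph (Fin m))
    (y : Fin m) (hβy : β y = 2) (i : ℕ) (hi2 : i ≤ (y : ℕ)) (f₀ : Fin m → Fin 4)
    (hs : SatFrom β G (pathAdj 4) i f₀) :
    ∃ c₁ c₂ : Fin 4, c₁ ≠ c₂ ∧ ∀ cc : Fin 4, (cc = c₁ ∨ cc = c₂) →
      ∃ g : Fin m → Fin 4, (∀ u v, G.Adj u v → pathAdj 4 (g u) (g v)) ∧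
        g y = cc ∧ ∀ v : Fin m, (v : ℕ) < i → g v = f₀ v := by
  have him : i < m := Nat.lt_of_le_of_lt hi2 y.isLt
  rw [SatFrom] at hs
  rw [dif_pos him] at hs
  obtain ⟨S, hcard, hS⟩ := hs
  by_cases hiy : i = (y : ℕ)
  · have hyy : (⟨i, him⟩ : Fin m) = y := Fin.ext hiy
    rw [hyy] at hcard hS
    obtain ⟨c₁, hc₁, c₂, hc₂, hne⟩ := Finset.one_lt_card.mp (by omega : 1 < S.card)
    refine ⟨c₁, c₂, hne, ?_⟩
    intro cc hcc
    have hccS : cc ∈ S := by rcases hcc with rfl | rfl <;> assumption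
    obtain ⟨g, hg, ha⟩ := L1 β hβ G (i + 1) _ (hS cc hccS)
    refine ⟨g, hg, ?_, ?_⟩
    · rw [ha y (by omega)]
      exact Function.update_self _ _ _
    · intro v hv
      rw [ha v (by omega), Function.update_of_ne (Fin.ne_of_val_ne (by omega)) _ _]
  · have hpos : 0 < S.card := by rcases hβ ⟨i, him⟩ with h' | h' <;> rw [h'] at hcard <;> omega
    obtain ⟨b, hb⟩ := Finset.card_pos.mp hpos
    obtain ⟨c₁, c₂, hne, hC⟩ := L2 β hβ G y hβy (i + 1) (by omega) _ (hS b hb)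
    refine ⟨c₁, c₂, hne, ?_⟩
    intro cc hcc
    obtain ⟨g, hg, hgy, ha⟩ := hC cc hcc
    exact ⟨g, hg, hgy, fun v hv => (ha v (by omega)).trans
      (Function.update_of_ne (Fin.ne_of_val_ne (by simp only [Fin.val_mk]; omega)) _ _)⟩
termination_by m - i

lemma L3 (β : Fin m → ℕ) (hβ : ∀ v, β v = 1 ∨ β v = 2) (G : SimpleGraph (Fin m))
    (x y : Fin m) (hxy : (x : ℕ) < (y : ℕ)) (hβx : β x = 2) (hβy : β y = 2)
    (i : ℕ) (hi : i ≤ (x : ℕ)) (f₀ : Fin m → Fin 4)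
    (hs : SatFrom β G (pathAdj 4) i f₀) :
    ∃ b₁ b₂ : Fin 4, b₁ ≠ b₂ ∧ ∀ b : Fin 4, (b = b₁ ∨ b = b₂) →
      ∃ c₁ c₂ : Fin 4, c₁ ≠ c₂ ∧ ∀ cc : Fin 4, (cc = c₁ ∨ cc = c₂) →
        ∃ g : Fin m → Fin 4, (∀ u v, G.Adj u v → pathAdj 4 (g u) (g v)) ∧
          g x = b ∧ g y = cc ∧ ∀ v : Fin m, (v : ℕ) < i → g v = f₀ v := by
  have him : i < m := Nat.lt_of_le_of_lt hi x.isLt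
  rw [SatFrom] at hs
  rw [dif_pos him] at hs
  obtain ⟨S, hcard, hS⟩ := hs
  by_cases hix : i = (x : ℕ)
  · have hxx : (⟨i, him⟩ : Fin m) = x := Fin.ext hix
    rw [hxx] at hcard hS
    obtain ⟨b₁, hb₁, b₂, hb₂, hne⟩ := Finset.one_lt_card.mp (by omega : 1 < S.card)
    refine ⟨b₁, b₂, hne, ?_⟩
    intro b hb
    have hbS : b ∈ S := by rcases hb with rfl | rfl <;> assumption
    obtain ⟨c₁, c₂, hcne, hC⟩ := L2 β hβ G y hβy (i + 1) (by omega) _ (hS b hbS)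
    refine ⟨c₁, c₂, hcne, ?_⟩
    intro cc hcc
    obtain ⟨g, hg, hgy, ha⟩ := hC cc hcc
    refine ⟨g, hg, ?_, hgy, ?_⟩
    · rw [ha x (by omega)]
      exact Function.update_self _ _ _
    · intro v hv
      rw [ha v (by omega), Function.update_of_ne (Fin.ne_of_val_ne (by omega)) _ _]
  · have hpos : 0 < S.card := by rcases hβ ⟨i, him⟩ with h' | h' <;> rw [h'] at hcard <;> omega
    obtain ⟨b, hb⟩ := Finset.card_pos.mp hpos
    obtain ⟨b₁, b₂, hne, hB⟩ := L3 β hβ G x y hxy hβx hβy (i + 1) (by omega) _ (hS b hb)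
    refine ⟨b₁, b₂, hne, ?_⟩
    intro bb hbb
    obtain ⟨c₁, c₂, hcne, hC⟩ := hB bb hbb
    refine ⟨c₁, c₂, hcne, ?_⟩
    intro cc hcc
    obtain ⟨g, hg, hgx, hgy, ha⟩ := hC cc hcc
    exact ⟨g, hg, hgx, hgy, fun v hv => (ha v (by omega)).trans
      (Function.update_of_ne (Fin.ne_of_val_ne (by simp only [Fin.val_mk]; omega)) _ _)⟩
termination_by m - i

lemma forward (β : Fin m → ℕ) (hβ : ∀ v, β v = 1 ∨ β v = 2) (G : SimpleGraph (Fin m))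
    (hconn : G.Connected) (c : Fin m → Bool) (hc : ∀ u v, G.Adj u v → c u ≠ c v)
    (f : Fin m) (hf : ∀ v, f ≤ v)
    (x y : Fin m) (hadj : G.Adj x y) (hβx : β x = 2) (hβy : β y = 2)
    (hxf : x ≠ f) (hyf : y ≠ f) (hxy : (x : ℕ) < (y : ℕ))
    (hsat : Sat β G (pathAdj 4)) : False := by
  have hm : 0 < m := x.pos
  have hle : f ≤ (⟨0, hm⟩ : Fin m) := hf _
  have hf0 : (f : ℕ) = 0 := by
    have h' : (f : ℕ) ≤ ((⟨0, hm⟩ : Fin m) : ℕ) := hle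
    simpa using h'
  have hs0 := hsat (fun _ => (0 : Fin 4))
  rw [SatFrom] at hs0
  rw [dif_pos hm] at hs0
  obtain ⟨S, hcard, hS⟩ := hs0
  have hpos : 0 < S.card := by rcases hβ ⟨0, hm⟩ with h' | h' <;> omega
  obtain ⟨b₀, hb₀⟩ := Finset.card_pos.mp hpos
  have hx1 : 1 ≤ (x : ℕ) := by
    rcases Nat.eq_zero_or_pos (x : ℕ) with h | h
    · exact absurd (Fin.ext (h.trans hf0.symm) : x = f) hxf
    · exact h
  obtain ⟨b₁, b₂, hbne, hB⟩ := L3 β hβ G x y hxy hβx hβy 1 hx1 _ (hS b₀ hb₀)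
  have hfid : f = (⟨0, hm⟩ : Fin m) := Fin.ext hf0
  have anchorval : ∀ g : Fin m → Fin 4,
      (∀ v : Fin m, (v : ℕ) < 1 → g v = Function.update (fun _ => (0 : Fin 4)) (⟨0, hm⟩ : Fin m) b₀ v) →
      g f = b₀ := by
    intro g ha
    rw [ha f (by omega), hfid, Function.update_self]
  obtain ⟨c₁, c₂, hc12, hC1⟩ := hB b₁ (Or.inl rfl)
  obtain ⟨c₃, c₄, hc34, hC2⟩ := hB b₂ (Or.inr rfl)
  obtain ⟨g11, hg11, hx11, hy11, ha11⟩ := hC1 c₁ (Or.inl rfl)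
  obtain ⟨g12, hg12, hx12, hy12, ha12⟩ := hC1 c₂ (Or.inr rfl)
  obtain ⟨g21, hg21, hx21, hy21, ha21⟩ := hC2 c₃ (Or.inl rfl)
  obtain ⟨g22, hg22, hx22, hy22, ha22⟩ := hC2 c₄ (Or.inr rfl)
  have pb : ((b₁ : ℕ) : ZMod 2) = ((b₂ : ℕ) : ZMod 2) := by
    have h := anchor G hconn c hc g11 g21 hg11 hg21 f x
      ((anchorval g11 ha11).trans (anchorval g21 ha21).symm)
    rwa [hx11, hx21] at h
  have pc1 : ((c₁ : ℕ) : ZMod 2) = ((c₂ : ℕ) : ZMod 2) := by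
    have h := anchor G hconn c hc g11 g12 hg11 hg12 f y
      ((anchorval g11 ha11).trans (anchorval g12 ha12).symm)
    rwa [hy11, hy12] at h
  have pc2 : ((c₃ : ℕ) : ZMod 2) = ((c₄ : ℕ) : ZMod 2) := by
    have h := anchor G hconn c hc g21 g22 hg21 hg22 f y
      ((anchorval g21 ha21).trans (anchorval g22 ha22).symm)
    rwa [hy21, hy22] at h
  have ad11 : pathAdj 4 b₁ c₁ := by have h := hg11 x y hadj; rwa [hx11, hy11] at h
  have ad12 : pathAdj 4 b₁ c₂ := by have h := hg12 x y hadj; rwa [hx12, hy12] at h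
  have ad21 : pathAdj 4 b₂ c₃ := by have h := hg21 x y hadj; rwa [hx21, hy21] at h
  have ad22 : pathAdj 4 b₂ c₄ := by have h := hg22 x y hadj; rwa [hx22, hy22] at h
  exact fin_main b₁ b₂ hbne pb c₁ c₂ c₃ c₄ hc12 hc34 pc1 pc2 ad11 ad12 ad21 ad22

lemma greedy (β : Fin m → ℕ) (G : SimpleGraph (Fin m)) (A : Fin m → Finset (Fin 4))
    (h2 : ∀ u v, G.Adj u v → ∀ a ∈ A u, ∀ b ∈ A v, pathAdj 4 a b)
    (i : ℕ) (f₀ : Fin m → Fin 4) (hlow : ∀ v : Fin m, (v : ℕ) < i → f₀ v ∈ A v)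
    (hhigh : ∀ v : Fin m, i ≤ (v : ℕ) → β v ≤ (A v).card) :
    SatFrom β G (pathAdj 4) i f₀ := by
  rw [SatFrom]
  by_cases h : i < m
  · rw [dif_pos h]
    obtain ⟨t, hts, htc⟩ := Finset.exists_subset_card_eq
      (hhigh ⟨i, h⟩ (le_refl i))
    refine ⟨t, htc, ?_⟩
    intro b hb
    apply greedy β G A h2 (i + 1)
    · intro v hv
      by_cases hvi : v = (⟨i, h⟩ : Fin m)
      · subst hvi
        rw [Function.update_self]
        exact hts hb
      · rw [Function.update_of_ne hvi]
        have : (v : ℕ) ≠ i := fun h' => hvi (Fin.ext h')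
        exact hlow v (by omega)
    · intro v hv
      exact hhigh v (by omega)
  · rw [dif_neg h]
    intro u v huv
    exact h2 u v huv _ (hlow u (by omega)) _ (hlow v (by omega))
termination_by m - i

lemma backward (β : Fin m → ℕ) (hβ : ∀ v, β v = 1 ∨ β v = 2) (G : SimpleGraph (Fin m))
    (c : Fin m → Bool) (hc : ∀ u v, G.Adj u v → c u ≠ c v)
    (f : Fin m) (hf : ∀ v, f ≤ v)
    (hno : ¬ ∃ x y : Fin m, G.Adj x y ∧ β x = 2 ∧ β y = 2 ∧ x ≠ f ∧ y ≠ f) :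
    Sat β G (pathAdj 4) := by
  intro f₀
  rw [SatFrom]
  by_cases hm : 0 < m
  · rw [dif_pos hm]
    have hle : f ≤ (⟨0, hm⟩ : Fin m) := hf _
    have hf0' : (f : ℕ) = 0 := by
      have h' : (f : ℕ) ≤ ((⟨0, hm⟩ : Fin m) : ℕ) := hle
      simpa using h'
    have hfid : f = (⟨0, hm⟩ : Fin m) := Fin.ext hf0'
    refine ⟨if β f = 2 then {1, 2} else {1}, ?_, ?_⟩
    · rw [← hfid]
      rcases hβ f with h | h
      · rw [h]; simp [h]
      · rw [h]; rw [if_pos rfl]; decide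
    · intro b hb
      have hb' : b = 1 ∨ b = 2 := by
        rcases hβ f with h | h <;> simp [h] at hb <;> tauto
      have main : ∀ be : Bool, b = (if be then 2 else 1) →
          SatFrom β G (pathAdj 4) 1 (Function.update f₀ ⟨0, hm⟩ b) := by
        intro be hbe
        apply greedy β G (fun v => AA ((c v == c f) == be) (decide (β v = 2 ∧ v ≠ f)))
        · intro u v huv a haA b' hbA
          refine AA_key _ _ _ _ ?_ ?_ a haA b' hbA
          · have hcu := hc u v huv
            cases hcuu : c u <;> cases hcvv : c v <;> cases hcff : c f <;> simp_all
          · by_contra hcon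
            rw [Bool.and_eq_false_iff] at hcon
            push_neg at hcon
            simp only [Bool.not_eq_false, decide_eq_true_eq] at hcon
            exact hno ⟨u, v, huv, hcon.1.1, hcon.2.1, hcon.1.2, hcon.2.2⟩
        · intro v hv
          have hv0 : (v : ℕ) = 0 := by omega
          rw [show v = (⟨0, hm⟩ : Fin m) from Fin.ext hv0, Function.update_self, ← hfid]
          have h1 : (c f == c f) = true := beq_self_eq_true _
          have h2 : decide (β f = 2 ∧ f ≠ f) = false := by simp
          rw [h1, h2, hbe]
          cases be <;> simp [AA]
        · intro v hv
          have hvf : v ≠ f := fun h' => by rw [h', hf0'] at hv; omega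
          rcases hβ v with h | h
          · rw [h]; exact AA_card1 _ _
          · have hd : decide (β v = 2 ∧ v ≠ f) = true := by simp [h, hvf]
            rw [hd, h]
            exact AA_card2 _
      rcases hb' with rfl | rfl
      · exact main false rfl
      · exact main true rfl
  · rw [dif_neg hm]
    intro u v huv
    exact absurd u.pos hm

end Aux

/-- Let `Ψ` have connected bipartite constraint graph `G`, `P_∞ ⊨ Ψ`, and
let `f` be the `≺`-least variable.  Then `P_4 ⊨ Ψ` iff the `∃^{≥2}` vertices of `G` are
pairwise non-adjacent except possibly for edges incident to `f`. -/
theorem p4_sat_iff {m : ℕ} (β : Fin m → ℕ) (hβ : ∀ v, β v = 1 ∨ β v = 2)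
    (G : SimpleGraph (Fin m)) (hconn : G.Connected) (hbip : Bipartite G)
    (hinf : Sat β G intPathAdj) (f : Fin m) (hf : ∀ v, f ≤ v) :
    Sat β G (pathAdj 4) ↔
      ¬ ∃ x y : Fin m, G.Adj x y ∧ β x = 2 ∧ β y = 2 ∧ x ≠ f ∧ y ≠ f := by
  obtain ⟨c, hc⟩ := hbip
  constructor
  · rintro hsat ⟨x, y, hadj, hbx, hby, hxf, hyf⟩
    rcases Nat.lt_or_ge (x : ℕ) (y : ℕ) with h | h
    · exact forward β hβ G hconn c hc f hf x y hadj hbx hby hxf hyf h hsat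
    · have hyx : (y : ℕ) < (x : ℕ) :=
        lt_of_le_of_ne h (fun h' => hadj.ne (Fin.ext h'.symm))
      exact forward β hβ G hconn c hc f hf y x hadj.symm hby hbx hyf hxf hyx hsat
  · intro hno
    exact backward β hβ G c hc f hf hno

end CountingCSP
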